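/- Let c ∈ ℝ, r > 0, ε > 0 and α(ε) = (e^ε + 1)/(e^ε − 1). Suppose γ1 < γ2 are real numbers and p : [c−r, c+r] → [0,1] satisfy: (C1, unbiasedness) p(w)·γ1 + (1−p(w))·γ2 = w for all w ∈ [c−r, c+r]; (C2, ε-LDP) p(w) ≤ e^ε·p(w′) and 1−p(w) ≤ e^ε·(1−p(w′)) for all w, w′ ∈ [c−r, c+r]. Then p(w) = (γ2 − w)/(γ2 − γ1) for all w ∈ [c−r, c+r], and moreover γ2 ≥ c + r·α(ε) and γ1 ≤ c − r·α(ε). -/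

import Mathlib

open Real Set

/-- `α(ε) = (e^ε + 1)/(e^ε − 1)`. -/
noncomputable def alphaFn (ε : ℝ) : ℝ := (Real.exp ε + 1) / (Real.exp ε - 1)

/-- for any binary-output stochastic quantizer on `[c−r, c+r]` with output levels
`γ1 < γ2` which is unbiased (C1) and `ε`-LDP (C2), we have `p(w) = (γ2 − w)/(γ2 − γ1)` on
`[c−r, c+r]`, and moreover `γ2 ≥ c + r·α(ε)` and `γ1 ≤ c − r·α(ε)`. -/
theorem stmt1 (c r ε : ℝ) (hr : 0 < r) (hε : 0 < ε)
    (γ1 γ2 : ℝ) (p : ℝ → ℝ) (hγ : γ1 < γ2)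
    (hp01 : ∀ w ∈ Icc (c - r) (c + r), p w ∈ Icc (0 : ℝ) 1)
    (hC1 : ∀ w ∈ Icc (c - r) (c + r), p w * γ1 + (1 - p w) * γ2 = w)
    (hC2 : ∀ w ∈ Icc (c - r) (c + r), ∀ w' ∈ Icc (c - r) (c + r),
      p w ≤ Real.exp ε * p w' ∧ 1 - p w ≤ Real.exp ε * (1 - p w')) :
    (∀ w ∈ Icc (c - r) (c + r), p w = (γ2 - w) / (γ2 - γ1)) ∧
      c + r * alphaFn ε ≤ γ2 ∧ γ1 ≤ c - r * alphaFn ε := by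
  have hd : 0 < γ2 - γ1 := sub_pos.mpr hγ
  have he1 : 1 < Real.exp ε := by
    calc (1 : ℝ) = Real.exp 0 := by simp
    _ < Real.exp ε := Real.exp_lt_exp.mpr hε
  have he : 0 < Real.exp ε - 1 := sub_pos.mpr he1
  have hform : ∀ w ∈ Icc (c - r) (c + r), p w = (γ2 - w) / (γ2 - γ1) := by
    intro w hw
    have h := hC1 w hw
    field_simp
    nlinarith [h]
  have hma : c - r ∈ Icc (c - r) (c + r) := ⟨le_refl _, by linarith⟩
  have hmb : c + r ∈ Icc (c - r) (c + r) := ⟨by linarith, le_refl _⟩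
  have h1 := (hC2 (c - r) hma (c + r) hmb).1
  have h2 := (hC2 (c + r) hmb (c - r) hma).2
  rw [hform _ hma, hform _ hmb] at h1 h2
  rw [div_le_iff₀ hd] at h1
  have h1' : γ2 - (c - r) ≤ Real.exp ε * (γ2 - (c + r)) := by
    have := mul_le_mul_of_nonneg_right h1 (le_of_lt hd)
    calc γ2 - (c - r) ≤ Real.exp ε * ((γ2 - (c + r)) / (γ2 - γ1)) * (γ2 - γ1) := h1
    _ = Real.exp ε * (γ2 - (c + r)) := by field_simp
  have h2' : (c + r) - γ1 ≤ Real.exp ε * ((c - r) - γ1) := by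
    have e1 : 1 - (γ2 - (c + r)) / (γ2 - γ1) = ((c + r) - γ1) / (γ2 - γ1) := by
      field_simp
      ring
    have e2 : 1 - (γ2 - (c - r)) / (γ2 - γ1) = ((c - r) - γ1) / (γ2 - γ1) := by
      field_simp
      ring
    rw [e1, e2, div_le_iff₀ hd] at h2
    calc (c + r) - γ1 ≤ Real.exp ε * (((c - r) - γ1) / (γ2 - γ1)) * (γ2 - γ1) := h2
    _ = Real.exp ε * ((c - r) - γ1) := by field_simp
  refine ⟨hform, ?_, ?_⟩
  · have : r * alphaFn ε ≤ γ2 - c := by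
      rw [alphaFn, ← mul_div_assoc, div_le_iff₀ he]
      nlinarith
    linarith
  · have : r * alphaFn ε ≤ c - γ1 := by
      rw [alphaFn, ← mul_div_assoc, div_le_iff₀ he]
      nlinarith
    linarith
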